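/- Let (R,m) be a Noetherian local ring. Then every finite system of linear polynomials fᵢ = c_{i1}X₁ + … + c_{iN}X_N + dᵢ (i = 1,…,r) with coefficients c_{ij}, dᵢ ∈ R admits an Artin bound that is bounded above by a linear function of n; that is, every system of (possibly inhomogeneous) linear equations over R has the linear approximation property. -/
import Mathlib


open MvPolynomial IsLocalRing

/-- `β` is an Artin bound for the system `f` with respect to the ideal `I`. -/
def IsArtinBound {R : Type*} [CommRing R] (I : Ideal R) {N r : ℕ}
    (f : Fin r → MvPolynomial (Fin N) R) (β : ℕ → ℕ) : Prop :=
  ∀ n : ℕ, ∀ a : Fin N → R, (∀ i, eval a (f i) ∈ I ^ β n) →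
    ∃ b : Fin N → R, (∀ i, eval b (f i) = 0) ∧ ∀ j, a j - b j ∈ I ^ n

lemma mem_smul_top_pi {R : Type*} [CommRing R] {r : ℕ} (I : Ideal R) (x : Fin r → R) :
    x ∈ I • (⊤ : Submodule R (Fin r → R)) ↔ ∀ i, x i ∈ I := by
  constructor
  · intro hx i
    refine Submodule.smul_induction_on hx (fun s hs m _ => ?_) (fun y z hy hz => ?_)
    · exact I.mul_mem_right _ hs
    · exact I.add_mem hy hz
  · intro h
    have : x = ∑ i : Fin r, (x i) • (Pi.single i (1 : R) : Fin r → R) := by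
      ext j
      simp [Pi.single_apply, Finset.sum_apply, mul_comm]
    rw [this]
    exact Submodule.sum_mem _ fun i _ =>
      Submodule.smul_mem_smul (h i) Submodule.mem_top

/-- **Lemma (linear equations).** Over a Noetherian local ring `(R, m)`, every finite system of
(possibly inhomogeneous) linear polynomials `fᵢ = c_{i1}X₁ + ⋯ + c_{iN}X_N + dᵢ` admits an
Artin bound that is bounded above by a linear function of `n`. -/
theorem lap_of_linear_system
    (R : Type*) [CommRing R] [IsNoetherianRing R] [IsLocalRing R]
    (N r : ℕ) (c : Fin r → Fin N → R) (d : Fin r → R) :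
    ∃ (β : ℕ → ℕ) (c' e : ℕ),
      IsArtinBound (maximalIdeal R)
        (fun i => (∑ j : Fin N, C (c i j) * X j) + C (d i)) β ∧
      ∀ n, β n ≤ c' * n + e := by
  set m := maximalIdeal R
  -- the linear map
  set φ : (Fin N → R) →ₗ[R] (Fin r → R) :=
    { toFun := fun a i => ∑ j : Fin N, c i j * a j
      map_add' := by
        intro a b; ext i; simp [Finset.sum_add_distrib, mul_add]
      map_smul' := by
        intro s a; ext i; simp [Finset.mul_sum, mul_left_comm] } with hφ
  have heval : ∀ (a : Fin N → R) (i : Fin r),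
      eval a ((∑ j : Fin N, C (c i j) * X j) + C (d i)) = φ a i + d i := by
    intro a i; simp [hφ]
  by_cases hsol : ∃ b₀ : Fin N → R, φ b₀ = -d
  · -- solvable case
    obtain ⟨b₀, hb₀⟩ := hsol
    obtain ⟨k, hk⟩ := (m).exists_pow_inf_eq_pow_smul (LinearMap.range φ)
    refine ⟨fun n => n + k, 1, k, ?_, fun n => by simp⟩
    intro n a ha
    -- φ a + d ∈ m^(n+k) • ⊤ ⊓ range φ
    have h1 : (fun i => φ a i + d i) ∈ (m ^ (n + k) • ⊤ ⊓ LinearMap.range φ :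
        Submodule R (Fin r → R)) := by
      constructor
      · exact (mem_smul_top_pi _ _).2 fun i => by
          have := ha i; rwa [heval] at this
      · exact ⟨a - b₀, by rw [map_sub, hb₀]; ext i; simp⟩
    rw [hk (n + k) (by omega)] at h1
    have h2 : (fun i => φ a i + d i) ∈
        m ^ (n + k - k) • (LinearMap.range φ) := by
      refine Submodule.smul_mono le_rfl inf_le_right h1
    rw [show n + k - k = n by omega, ← Submodule.map_top (f := φ),
      ← Submodule.map_smul''] at h2
    obtain ⟨z, hz, hz2⟩ := h2
    refine ⟨a - z, fun i => ?_, fun j => ?_⟩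
    · rw [heval, map_sub]
      have : φ z i = φ a i + d i := congrFun hz2 i
      simp [Pi.sub_apply, this]
    · have : a j - (a - z) j = z j := by simp
      rw [this]
      exact (mem_smul_top_pi _ _).1 hz j
  · -- unsolvable case: find k with no approximate solution at level k
    have hne : Submodule.Quotient.mk (p := LinearMap.range φ) d ≠ 0 := by
      intro h
      rw [Submodule.Quotient.mk_eq_zero] at h
      obtain ⟨b₀, hb₀⟩ := h
      exact hsol ⟨-b₀, by rw [map_neg, hb₀]⟩
    have hbot : (⨅ i : ℕ, m ^ i • ⊤ :
        Submodule R ((Fin r → R) ⧸ LinearMap.range φ)) = ⊥ :=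
      Ideal.iInf_pow_smul_eq_bot_of_isLocalRing _ (IsLocalRing.maximalIdeal.isMaximal R).ne_top
    have hex : ∃ k : ℕ, Submodule.Quotient.mk (p := LinearMap.range φ) d ∉
        (m ^ k • ⊤ : Submodule R ((Fin r → R) ⧸ LinearMap.range φ)) := by
      by_contra h
      push_neg at h
      exact hne (by rw [← Submodule.mem_bot (R := R), ← hbot, Submodule.mem_iInf]; exact h)
    obtain ⟨k, hkd⟩ := hex
    refine ⟨fun _ => k, 0, k, ?_, fun n => by simp⟩
    intro n a ha
    exfalso
    apply hkd
    have h1 : (fun i => φ a i + d i) ∈ (m ^ k • ⊤ : Submodule R (Fin r → R)) :=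
      (mem_smul_top_pi _ _).2 fun i => by have := ha i; rwa [heval] at this
    have h2 : Submodule.Quotient.mk (p := LinearMap.range φ) (fun i => φ a i + d i) ∈
        (m ^ k • ⊤ : Submodule R ((Fin r → R) ⧸ LinearMap.range φ)) := by
      have := Submodule.mem_map_of_mem (f := (LinearMap.range φ).mkQ) h1
      rw [Submodule.map_smul'', Submodule.map_top] at this
      exact Submodule.smul_mono le_rfl le_top this
    have h3 : Submodule.Quotient.mk (p := LinearMap.range φ) (fun i => φ a i + d i) =
        Submodule.Quotient.mk (p := LinearMap.range φ) d := by
      rw [Submodule.Quotient.eq]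
      exact ⟨a, by ext i; simp⟩
    rwa [h3] at h2
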